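/- Let k be a field of characteristic zero, K a finitely generated field extension of k, and K(x,y) a rational function field in two variables over K. Write K = k(r₁,…,r_m) and let B = k[x, y, r₁x, r₁y, …, r_m x, r_m y] ⊆ K[x,y]. Then B is an affine k-domain with Frac(B) = K(x,y), B ∩ K = k, and the Makar-Limanov invariant of B equals k. -/

import Mathlib

def IsLND {B : Type*} [CommRing B] (D : B → B) : Prop :=
  (∀ a b : B, D (a + b) = D a + D b) ∧
  (∀ a b : B, D (a * b) = a * D b + D a * b) ∧
  (∀ x : B, ∃ n : ℕ, D^[n] x = 0)

open MvPolynomial Finset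

section IterAux

variable {A : Type*} [AddCommMonoid A]

lemma aux_iter_zero (f : A → A) (h0 : f 0 = 0) (n : ℕ) : f^[n] 0 = 0 :=
  Function.iterate_fixed h0 n

lemma aux_iter_add (f : A → A) (hadd : ∀ a b, f (a + b) = f a + f b) (n : ℕ)
    (a b : A) : f^[n] (a + b) = f^[n] a + f^[n] b := by
  induction n generalizing a b with
  | zero => simp
  | succ n ih =>
    rw [Function.iterate_succ_apply, hadd, ih, Function.iterate_succ_apply,
      Function.iterate_succ_apply]

lemma aux_iter_ge (f : A → A) (h0 : f 0 = 0) {n : ℕ} {a : A} (hn : f^[n] a = 0)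
    {N : ℕ} (hN : n ≤ N) : f^[N] a = 0 := by
  have : N = (N - n) + n := by omega
  rw [this, Function.iterate_add_apply, hn, aux_iter_zero f h0]

end IterAux

section PDerivAux

variable {K : Type*} [Field K]

lemma aux_coeff_pderiv (i : Fin 2) (p : MvPolynomial (Fin 2) K) (m : Fin 2 →₀ ℕ) :
    coeff m (pderiv i p) = (m i + 1) * coeff (m + Finsupp.single i 1) p := by
  induction p using MvPolynomial.induction_on' with
  | add p q hp hq => rw [map_add, coeff_add, coeff_add, hp, hq, mul_add]
  | monomial s a =>
    rw [pderiv_monomial, coeff_monomial, coeff_monomial]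
    by_cases h : s = m + Finsupp.single i 1
    · subst h
      rw [if_pos (add_tsub_cancel_right m (Finsupp.single i 1)), if_pos rfl]
      simp [mul_comm]
    · rw [if_neg h, mul_zero]
      by_cases hs : s - Finsupp.single i 1 = m
      · rcases Nat.eq_zero_or_pos (s i) with h0 | h0
        · rw [if_pos hs, h0, Nat.cast_zero, mul_zero]
        · exfalso
          apply h
          ext j
          have hj := DFunLike.congr_fun hs j
          rw [Finsupp.tsub_apply] at hj
          rw [Finsupp.add_apply]
          rcases eq_or_ne j i with rfl | hne
          · simp only [Finsupp.single_eq_same] at hj ⊢; omega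
          · simp only [Finsupp.single_eq_of_ne' (Ne.symm hne)] at hj ⊢; omega
      · rw [if_neg hs]

lemma aux_eq_C [CharZero K] (p : MvPolynomial (Fin 2) K)
    (h0 : pderiv 0 p = 0) (h1 : pderiv 1 p = 0) : p = C (coeff 0 p) := by
  have key : ∀ i : Fin 2, pderiv i p = 0 → ∀ n : Fin 2 →₀ ℕ, n i ≠ 0 → coeff n p = 0 := by
    intro i hi n hn
    have h2 := aux_coeff_pderiv i p (n - Finsupp.single i 1)
    have hsum : (n - Finsupp.single i 1) + Finsupp.single i 1 = n := by
      ext j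
      rw [Finsupp.add_apply, Finsupp.tsub_apply]
      rcases eq_or_ne j i with rfl | hne
      · simp only [Finsupp.single_eq_same]; omega
      · simp only [Finsupp.single_eq_of_ne' (Ne.symm hne)]; omega
    rw [hi, coeff_zero, hsum] at h2
    rcases mul_eq_zero.mp h2.symm with h | h
    · exact absurd h (Nat.cast_add_one_ne_zero _)
    · exact h
  ext n
  rw [coeff_C]
  rcases eq_or_ne (0 : Fin 2 →₀ ℕ) n with rfl | hn
  · rw [if_pos rfl]
  · rw [if_neg hn]
    have : ∃ i, n i ≠ 0 := by
      by_contra hc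
      push_neg at hc
      exact hn (by ext j; exact (hc j).symm)
    obtain ⟨i, hi⟩ := this
    have hpi : pderiv i p = 0 := by fin_cases i <;> assumption
    exact key i hpi n hi

lemma aux_pd_nil (i : Fin 2) (p : MvPolynomial (Fin 2) K) :
    ∃ n, (pderiv i)^[n] p = 0 := by
  have h0 : (pderiv i) (0 : MvPolynomial (Fin 2) K) = 0 := map_zero _
  have hadd : ∀ a b : MvPolynomial (Fin 2) K,
      pderiv i (a + b) = pderiv i a + pderiv i b := fun a b => map_add _ a b
  induction p using MvPolynomial.induction_on with
  | C c => exact ⟨1, by simp⟩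
  | add p q hp hq =>
    obtain ⟨n, hn⟩ := hp
    obtain ⟨o, ho⟩ := hq
    refine ⟨max n o, ?_⟩
    rw [aux_iter_add _ hadd, aux_iter_ge _ h0 hn (le_max_left n o),
      aux_iter_ge _ h0 ho (le_max_right n o), add_zero]
  | mul_X p j hp =>
    obtain ⟨n, hn⟩ := hp
    induction n generalizing p with
    | zero =>
      simp only [Function.iterate_zero, id_eq] at hn
      subst hn
      exact ⟨0, by simp⟩
    | succ n ih =>
      have hstep : (pderiv i)^[n] (pderiv i p) = 0 := by
        rw [← Function.iterate_succ_apply]; exact hn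
      obtain ⟨o, ho⟩ := ih (pderiv i p) hstep
      rcases eq_or_ne j i with rfl | hij
      · refine ⟨max o (n + 1) + 1, ?_⟩
        rw [Function.iterate_succ_apply, pderiv_mul, pderiv_X_self, mul_one,
          aux_iter_add _ hadd, aux_iter_ge _ h0 ho (le_max_left _ _),
          aux_iter_ge _ h0 hn (le_max_right _ _), add_zero]
      · refine ⟨o + 1, ?_⟩
        rw [Function.iterate_succ_apply, pderiv_mul, pderiv_X_of_ne hij, mul_zero,
          add_zero, ho]

lemma aux_g_iter (i j : Fin 2) (hij : j ≠ i) (n : ℕ) (p : MvPolynomial (Fin 2) K) :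
    (fun q => X j * pderiv i q)^[n] p = X j ^ n * (pderiv i)^[n] p := by
  induction n generalizing p with
  | zero => simp
  | succ n ih =>
    rw [Function.iterate_succ_apply', ih, Function.iterate_succ_apply']
    show X j * pderiv i (X j ^ n * (pderiv i)^[n] p) = _
    rw [pderiv_mul]
    have hXn : pderiv i (X j ^ n : MvPolynomial (Fin 2) K) = 0 := by
      rw [pderiv_pow, pderiv_X_of_ne hij, mul_zero]
    rw [hXn, zero_mul, zero_add, pow_succ]
    ring

end PDerivAux

section LNDAux

open Finset

variable {R : Type*} [CommRing R] {D : R → R}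

lemma aux_lnd_zero (h : IsLND D) : D 0 = 0 := by
  have h0 := h.1 0 0
  rw [add_zero] at h0
  -- h0 : D 0 = D 0 + D 0
  have := add_left_cancel (a := D 0) (b := (0 : R)) (c := D 0) (by rw [add_zero, ← h0])
  exact this.symm

lemma aux_lnd_one (h : IsLND D) : D 1 = 0 := by
  have h1 := h.2.1 1 1
  rw [mul_one, one_mul, mul_one] at h1
  have := add_left_cancel (a := D 1) (b := (0 : R)) (c := D 1) (by rw [add_zero, ← h1])
  exact this.symm

lemma aux_lnd_nsmul (h : IsLND D) (c : ℕ) (x : R) : D (c • x) = c • D x := by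
  induction c with
  | zero => simpa using aux_lnd_zero h
  | succ c ih => rw [succ_nsmul, succ_nsmul, h.1, ih]

lemma aux_lnd_sum (h : IsLND D) {ι : Type*} (s : Finset ι) (f : ι → R) :
    D (∑ i ∈ s, f i) = ∑ i ∈ s, D (f i) := by
  classical
  induction s using Finset.induction_on with
  | empty => simpa using aux_lnd_zero h
  | insert x s hx ih =>
    rw [Finset.sum_insert hx, Finset.sum_insert hx, h.1, ih]

lemma aux_lnd_binom (h : IsLND D) (a b : R) (n : ℕ) :
    D^[n] (a * b) = ∑ i ∈ range (n + 1), n.choose i • (D^[n - i] a * D^[i] b) := by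
  induction n with
  | zero => simp [Finset.range]
  | succ n IH =>
    calc
      D^[n + 1] (a * b) =
          D (∑ i ∈ range n.succ, n.choose i • (D^[n - i] a * D^[i] b)) := by
        rw [Function.iterate_succ_apply', IH]
      _ = (∑ i ∈ range n.succ, n.choose i • (D^[n - i + 1] a * D^[i] b)) +
          ∑ i ∈ range n.succ, n.choose i • (D^[n - i] a * D^[i + 1] b) := by
        rw [aux_lnd_sum h]
        have : ∀ i ∈ range n.succ,
            D (n.choose i • (D^[n - i] a * D^[i] b)) =
              n.choose i • (D^[n - i + 1] a * D^[i] b) +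
                n.choose i • (D^[n - i] a * D^[i + 1] b) := by
          intro i _
          rw [aux_lnd_nsmul h, h.2.1, Function.iterate_succ_apply',
            Function.iterate_succ_apply', smul_add]
          exact add_comm _ _
        rw [Finset.sum_congr rfl this, sum_add_distrib]
      _ = (∑ i ∈ range n.succ,
                n.choose i.succ • (D^[n - i] a * D^[i + 1] b)) +
              1 • (D^[n + 1] a * D^[0] b) +
            ∑ i ∈ range n.succ, n.choose i • (D^[n - i] a * D^[i + 1] b) := ?_
      _ = ((∑ i ∈ range n.succ, n.choose i • (D^[n - i] a * D^[i + 1] b)) +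
              ∑ i ∈ range n.succ,
                n.choose i.succ • (D^[n - i] a * D^[i + 1] b)) +
            1 • (D^[n + 1] a * D^[0] b) := by
        rw [add_comm, add_assoc]
      _ = (∑ i ∈ range n.succ,
              (n + 1).choose (i + 1) • (D^[n + 1 - (i + 1)] a * D^[i + 1] b)) +
            1 • (D^[n + 1] a * D^[0] b) := by
        simp_rw [Nat.choose_succ_succ, Nat.succ_sub_succ, add_smul, sum_add_distrib]
      _ = ∑ i ∈ range n.succ.succ,
            n.succ.choose i • (D^[n.succ - i] a * D^[i] b) := by
        rw [sum_range_succ' _ n.succ, Nat.choose_zero_right, tsub_zero]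
    congr
    refine (sum_range_succ' _ _).trans (congr_arg₂ (· + ·) ?_ ?_)
    · rw [sum_range_succ, Nat.choose_succ_self, zero_smul, add_zero]
      refine sum_congr rfl fun i hi => ?_
      rw [mem_range] at hi
      congr
      omega
    · rw [Nat.choose_zero_right, tsub_zero]

lemma aux_lnd_unit [IsDomain R] [CharZero R] (h : IsLND D) {u v : R}
    (huv : u * v = 1) : D u = 0 := by
  classical
  by_contra hDu
  have hu0 : u ≠ 0 := fun h0 => by simp [h0] at huv
  have hv0 : v ≠ 0 := fun h0 => by simp [h0] at huv
  have hexu := h.2.2 u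
  have hexv := h.2.2 v
  set p := Nat.find hexu with hp
  set q := Nat.find hexv with hq
  have hpu : D^[p] u = 0 := Nat.find_spec hexu
  have hqv : D^[q] v = 0 := Nat.find_spec hexv
  have hp2 : 2 ≤ p := by
    rcases Nat.lt_or_ge p 2 with hlt | hge
    · interval_cases p
      · exact absurd hpu hu0
      · exact absurd hpu hDu
    · exact hge
  have hq1 : 1 ≤ q := by
    rcases Nat.eq_zero_or_pos q with h0 | h1
    · rw [h0] at hqv; exact absurd hqv hv0
    · exact h1
  have hpm : D^[p - 1] u ≠ 0 := Nat.find_min hexu (by omega)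
  have hqm : D^[q - 1] v ≠ 0 := Nat.find_min hexv (by omega)
  set N := (p - 1) + (q - 1) with hN
  have hDN : D^[N] (u * v) = 0 := by
    rw [huv]
    have : N = (N - 1) + 1 := by omega
    rw [this, Function.iterate_succ_apply, aux_lnd_one h,
      aux_iter_zero D (aux_lnd_zero h)]
  have hbin := aux_lnd_binom h u v N
  rw [hDN] at hbin
  have hsingle : ∑ i ∈ Finset.range (N + 1), N.choose i • (D^[N - i] u * D^[i] v) =
      N.choose (q - 1) • (D^[N - (q - 1)] u * D^[q - 1] v) := by
    refine Finset.sum_eq_single (q - 1) ?_ ?_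
    · intro i hi hne
      rw [Finset.mem_range] at hi
      rcases Nat.lt_or_ge i (q - 1) with hlt | hge
      · have hpN : p ≤ N - i := by omega
        rw [aux_iter_ge D (aux_lnd_zero h) hpu hpN, zero_mul, smul_zero]
      · have hqi : q ≤ i := by omega
        rw [aux_iter_ge D (aux_lnd_zero h) hqv hqi, mul_zero, smul_zero]
    · intro hmem
      exact absurd (Finset.mem_range.mpr (by omega)) hmem
  have hNq : N - (q - 1) = p - 1 := by omega
  rw [hsingle, hNq, ← Nat.cast_smul_eq_nsmul R, smul_eq_mul] at hbin
  rcases mul_eq_zero.mp hbin.symm with hc | hc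
  · exact absurd hc (Nat.cast_ne_zero.mpr (Nat.choose_pos (by omega)).ne')
  · exact absurd hc (mul_ne_zero hpm hqm)

end LNDAux

set_option maxHeartbeats 4000000 in
set_option synthInstance.maxHeartbeats 400000 in
lemma aux_part2 {k K : Type*} [Field k] [Field K] [Algebra k K]
    {m : ℕ} (r : Fin m → K)
    (hgen : IntermediateField.adjoin k (Set.range r) = ⊤)
    (B : Subalgebra k (MvPolynomial (Fin 2) K))
    (hX0 : (X 0 : MvPolynomial (Fin 2) K) ∈ B)
    (hX1 : (X 1 : MvPolynomial (Fin 2) K) ∈ B)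
    (hCr0 : ∀ i : Fin m, C (r i) * X 0 ∈ B) :
    ∀ q : FractionRing (MvPolynomial (Fin 2) K), ∃ a b : MvPolynomial (Fin 2) K,
      a ∈ B ∧ b ∈ B ∧ b ≠ 0 ∧
      q * algebraMap (MvPolynomial (Fin 2) K) (FractionRing (MvPolynomial (Fin 2) K)) b =
        algebraMap (MvPolynomial (Fin 2) K) (FractionRing (MvPolynomial (Fin 2) K)) a := by
  classical
  set ι : MvPolynomial (Fin 2) K →+* FractionRing (MvPolynomial (Fin 2) K) :=
    algebraMap (MvPolynomial (Fin 2) K) (FractionRing (MvPolynomial (Fin 2) K)) with hι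
  have hinj : Function.Injective ι := IsFractionRing.injective _ _
  have halg : ∀ d : k, algebraMap k (MvPolynomial (Fin 2) K) d = C (algebraMap k K d) :=
    fun d => by
      rw [IsScalarTower.algebraMap_apply k K (MvPolynomial (Fin 2) K), algebraMap_eq]
  set F : Subfield (FractionRing (MvPolynomial (Fin 2) K)) :=
    { carrier := {q | ∃ a b, a ∈ B ∧ b ∈ B ∧ b ≠ 0 ∧ q * ι b = ι a}
      one_mem' := ⟨1, 1, B.one_mem, B.one_mem, one_ne_zero, by rw [map_one, mul_one]⟩
      zero_mem' := ⟨0, 1, B.zero_mem, B.one_mem, one_ne_zero, by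
        rw [map_one, map_zero, zero_mul]⟩
      mul_mem' := by
        rintro q1 q2 ⟨a1, b1, ha1, hb1, hb10, h1⟩ ⟨a2, b2, ha2, hb2, hb20, h2⟩
        refine ⟨a1 * a2, b1 * b2, mul_mem ha1 ha2, mul_mem hb1 hb2,
          mul_ne_zero hb10 hb20, ?_⟩
        rw [map_mul, map_mul]
        linear_combination (q2 * ι b2) * h1 + ι a1 * h2
      add_mem' := by
        rintro q1 q2 ⟨a1, b1, ha1, hb1, hb10, h1⟩ ⟨a2, b2, ha2, hb2, hb20, h2⟩
        refine ⟨a1 * b2 + a2 * b1, b1 * b2, add_mem (mul_mem ha1 hb2) (mul_mem ha2 hb1),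
          mul_mem hb1 hb2, mul_ne_zero hb10 hb20, ?_⟩
        rw [map_mul, map_add, map_mul, map_mul]
        linear_combination ι b2 * h1 + ι b1 * h2
      neg_mem' := by
        rintro q ⟨a, b, ha, hb, hb0, hq⟩
        exact ⟨-a, b, neg_mem ha, hb, hb0, by rw [map_neg]; linear_combination -hq⟩
      inv_mem' := by
        rintro q ⟨a, b, ha, hb, hb0, hq⟩
        rcases eq_or_ne q 0 with rfl | hq0
        · exact ⟨0, 1, B.zero_mem, B.one_mem, one_ne_zero, by
            rw [map_one, map_zero, inv_zero, zero_mul]⟩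
        · have hιb : ι b ≠ 0 := fun hh => hb0 (hinj (by rw [hh, map_zero]))
          have hιa : ι a ≠ 0 := by
            intro hh
            rw [hh] at hq
            exact (mul_ne_zero hq0 hιb) hq
          have ha0 : a ≠ 0 := fun hh => hιa (by rw [hh, map_zero])
          refine ⟨b, a, hb, ha, ha0, ?_⟩
          rw [← hq, ← mul_assoc, inv_mul_cancel₀ hq0, one_mul] } with hF
  have hBF : ∀ p ∈ B, ι p ∈ F := fun p hp =>
    ⟨p, 1, hp, B.one_mem, one_ne_zero, by rw [map_one, mul_one]⟩
  have hKF : ∀ c : K, ι (C c) ∈ F := by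
    have hsub : (Set.range (algebraMap k K) ∪ Set.range r) ⊆
        ↑(F.comap (ι.comp (C : K →+* MvPolynomial (Fin 2) K))) := by
      rintro x (⟨d, rfl⟩ | ⟨i, rfl⟩)
      · exact Subfield.mem_comap.mpr (hBF _ (show C (algebraMap k K d) ∈ B by rw [← halg d]; exact B.algebraMap_mem d))
      · exact Subfield.mem_comap.mpr
          ⟨C (r i) * X 0, X 0, hCr0 i, hX0, MvPolynomial.X_ne_zero _,
            (map_mul ι _ _).symm⟩
    have hle := Subfield.closure_le.mpr hsub
    intro c
    have hc : c ∈ (⊤ : IntermediateField k K) := trivial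
    rw [← hgen] at hc
    have hc2 : c ∈ Subfield.closure (Set.range (algebraMap k K) ∪ Set.range r) := by
      rw [← IntermediateField.adjoin_toSubfield]; exact hc
    exact Subfield.mem_comap.mp (hle hc2)
  have hXmem : ∀ j : Fin 2, (X j : MvPolynomial (Fin 2) K) ∈ B := by
    intro j
    have hj : j = 0 ∨ j = 1 := by omega
    rcases hj with rfl | rfl
    · exact hX0
    · exact hX1
  have hpoly : ∀ p : MvPolynomial (Fin 2) K, ι p ∈ F := by
    intro p
    induction p using MvPolynomial.induction_on with
    | C c => exact hKF c
    | add p q hp hq => rw [map_add]; exact F.add_mem hp hq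
    | mul_X p j hp => rw [map_mul]; exact F.mul_mem hp (hBF _ (hXmem j))
  intro q
  obtain ⟨a, b, hbden, hq⟩ := IsFractionRing.div_surjective (A := MvPolynomial (Fin 2) K) q
  have hqF : q ∈ F := by
    rw [← hq]
    exact F.div_mem (hpoly a) (hpoly b)
  obtain ⟨a', b', ha', hb', hb0', hq'⟩ := hqF
  exact ⟨a', b', ha', hb', hb0', hq'⟩

set_option maxHeartbeats 1000000 in
set_option synthInstance.maxHeartbeats 400000 in
open MvPolynomial in
/-- Let `K = k(r₁,…,r_m)` be a finitely generated field extension of a field `k` of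
characteristic zero, and let `B = k[x, y, r₁x, r₁y, …, r_m x, r_m y] ⊆ K[x,y]`.
Then `B` is an affine `k`-domain (finitely generated over `k`), `Frac B = K(x,y)`,
`B ∩ K = k`, and `ML(B) = k`. -/
theorem stmt10 {k K : Type*} [Field k] [Field K] [Algebra k K] [CharZero k]
    {m : ℕ} (r : Fin m → K)
    (hgen : IntermediateField.adjoin k (Set.range r) = ⊤)
    (B : Subalgebra k (MvPolynomial (Fin 2) K))
    (hB : B = Algebra.adjoin k
      ({X 0, X 1} ∪ ⋃ i : Fin m, {C (r i) * X 0, C (r i) * X 1})) :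
    B.FG ∧
    (∀ q : FractionRing (MvPolynomial (Fin 2) K), ∃ a b : MvPolynomial (Fin 2) K,
      a ∈ B ∧ b ∈ B ∧ b ≠ 0 ∧
      q * algebraMap (MvPolynomial (Fin 2) K) (FractionRing (MvPolynomial (Fin 2) K)) b =
        algebraMap (MvPolynomial (Fin 2) K) (FractionRing (MvPolynomial (Fin 2) K)) a) ∧
    (∀ c : K, C c ∈ B → ∃ d : k, algebraMap k K d = c) ∧
    (∀ b : ↥B, (∀ D : ↥B → ↥B, IsLND D → D b = 0) → ∃ d : k, algebraMap k ↥B d = b) ∧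
    (∀ d : k, ∀ D : ↥B → ↥B, IsLND D → D (algebraMap k ↥B d) = 0) := by
  classical
  haveI : CharZero K := charZero_of_injective_algebraMap (algebraMap k K).injective
  set S : Set (MvPolynomial (Fin 2) K) :=
    ({X 0, X 1} ∪ ⋃ i : Fin m, {C (r i) * X 0, C (r i) * X 1}) with hS
  have hmemS : ∀ s ∈ S, s ∈ B := fun s hs => hB ▸ Algebra.subset_adjoin hs
  have hX0 : (X 0 : MvPolynomial (Fin 2) K) ∈ B := hmemS _ (by simp [hS])
  have hX1 : (X 1 : MvPolynomial (Fin 2) K) ∈ B := hmemS _ (by simp [hS])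
  have hCr0 : ∀ i : Fin m, C (r i) * X 0 ∈ B := fun i =>
    hmemS _ (by simp only [hS, Set.mem_union, Set.mem_iUnion, Set.mem_insert_iff,
      Set.mem_singleton_iff]; exact Or.inr ⟨i, Or.inl rfl⟩)
  have hCr1 : ∀ i : Fin m, C (r i) * X 1 ∈ B := fun i =>
    hmemS _ (by simp only [hS, Set.mem_union, Set.mem_iUnion, Set.mem_insert_iff,
      Set.mem_singleton_iff]; exact Or.inr ⟨i, Or.inr rfl⟩)
  have halg : ∀ d : k, algebraMap k (MvPolynomial (Fin 2) K) d = C (algebraMap k K d) :=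
    fun d => by
      rw [IsScalarTower.algebraMap_apply k K (MvPolynomial (Fin 2) K), algebraMap_eq]
  -- Part 3
  have hpart3 : ∀ c : K, C c ∈ B → ∃ d : k, algebraMap k K d = c := by
    have hcc : ∀ p ∈ B, ∃ d : k, algebraMap k K d = constantCoeff p := by
      intro p hp
      rw [hB] at hp
      induction hp using Algebra.adjoin_induction with
      | mem x hx =>
        refine ⟨0, ?_⟩
        rw [map_zero]
        simp only [hS, Set.mem_union, Set.mem_insert_iff, Set.mem_singleton_iff,
          Set.mem_iUnion] at hx
        rcases hx with (rfl | rfl) | ⟨i, (rfl | rfl)⟩ <;> simp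
      | algebraMap d => exact ⟨d, by rw [halg d, constantCoeff_C]⟩
      | add x y hx hy ihx ihy =>
        obtain ⟨d1, h1⟩ := ihx; obtain ⟨d2, h2⟩ := ihy
        exact ⟨d1 + d2, by rw [map_add, map_add, h1, h2]⟩
      | mul x y hx hy ihx ihy =>
        obtain ⟨d1, h1⟩ := ihx; obtain ⟨d2, h2⟩ := ihy
        exact ⟨d1 * d2, by rw [map_mul, map_mul, h1, h2]⟩
    intro c hc
    obtain ⟨d, hd⟩ := hcc _ hc
    exact ⟨d, by rwa [constantCoeff_C] at hd⟩
  -- Part 1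
  have hSfin : S.Finite := by
    rw [hS]
    refine Set.Finite.union ((Set.finite_singleton _).insert _)
      (Set.finite_iUnion fun i => (Set.finite_singleton _).insert _)
  have hpart1 : B.FG := by
    refine ⟨hSfin.toFinset, ?_⟩
    rw [Set.Finite.coe_toFinset]
    exact hB.symm
  -- Part 2
  have hpart2 := aux_part2 r hgen B hX0 hX1 hCr0
  -- instances on ↥B
  haveI hdom : IsDomain ↥B := inferInstance
  haveI : CharZero ↥B := charZero_of_injective_algebraMap (algebraMap k ↥B).injective
  -- Part 5
  have hpart5 : ∀ d : k, ∀ D : ↥B → ↥B, IsLND D → D (algebraMap k ↥B d) = 0 := by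
    intro d D hD
    rcases eq_or_ne d 0 with rfl | hd
    · rw [map_zero]; exact aux_lnd_zero hD
    · exact aux_lnd_unit hD (u := algebraMap k ↥B d) (v := algebraMap k ↥B d⁻¹)
        (by rw [← map_mul, mul_inv_cancel₀ hd, map_one])
  -- Part 4
  have hstab : ∀ i j : Fin 2, (∀ s ∈ S, X j * pderiv i s ∈ B) →
      ∀ p ∈ B, X j * pderiv i p ∈ B := by
    intro i j hgens p hp
    rw [hB] at hp
    induction hp using Algebra.adjoin_induction with
    | mem x hx => exact hgens x hx
    | algebraMap d => rw [halg d, pderiv_C, mul_zero]; exact B.zero_mem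
    | add x y hx hy ihx ihy => rw [map_add, mul_add]; exact add_mem ihx ihy
    | mul x y hx hy ihx ihy =>
      have hxB : x ∈ B := by rw [hB]; exact hx
      have hyB : y ∈ B := by rw [hB]; exact hy
      have hrw : X j * pderiv i (x * y) =
          x * (X j * pderiv i y) + (X j * pderiv i x) * y := by
        rw [pderiv_mul]; ring
      rw [hrw]
      exact add_mem (mul_mem hxB ihy) (mul_mem ihx hyB)
  have hg01 : ∀ s ∈ S, X 1 * pderiv 0 s ∈ B := by
    intro s hs
    simp only [hS, Set.mem_union, Set.mem_insert_iff, Set.mem_singleton_iff,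
      Set.mem_iUnion] at hs
    rcases hs with (rfl | rfl) | ⟨i, (rfl | rfl)⟩
    · rw [pderiv_X_self, mul_one]; exact hX1
    · rw [pderiv_X_of_ne (by decide), mul_zero]; exact B.zero_mem
    · rw [pderiv_C_mul, pderiv_X_self, mul_one, mul_comm]; exact hCr1 i
    · rw [pderiv_C_mul, pderiv_X_of_ne (by decide), mul_zero, mul_zero]; exact B.zero_mem
  have hg10 : ∀ s ∈ S, X 0 * pderiv 1 s ∈ B := by
    intro s hs
    simp only [hS, Set.mem_union, Set.mem_insert_iff, Set.mem_singleton_iff,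
      Set.mem_iUnion] at hs
    rcases hs with (rfl | rfl) | ⟨i, (rfl | rfl)⟩
    · rw [pderiv_X_of_ne (by decide), mul_zero]; exact B.zero_mem
    · rw [pderiv_X_self, mul_one]; exact hX0
    · rw [pderiv_C_mul, pderiv_X_of_ne (by decide), mul_zero, mul_zero]; exact B.zero_mem
    · rw [pderiv_C_mul, pderiv_X_self, mul_one, mul_comm]; exact hCr0 i
  have hD : ∀ i j : Fin 2, j ≠ i → (∀ s ∈ S, X j * pderiv i s ∈ B) →
      ∃ D : ↥B → ↥B, IsLND D ∧
        ∀ b : ↥B, D b = 0 → pderiv i (b : MvPolynomial (Fin 2) K) = 0 := by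
    intro i j hij hgens
    have hst := hstab i j hgens
    set D : ↥B → ↥B := fun b => ⟨X j * pderiv i (b : MvPolynomial (Fin 2) K), hst _ b.2⟩
      with hDdef
    have hval : ∀ b : ↥B, ((D b : ↥B) : MvPolynomial (Fin 2) K) =
        X j * pderiv i (b : MvPolynomial (Fin 2) K) := fun b => rfl
    refine ⟨D, ⟨?_, ?_, ?_⟩, ?_⟩
    · intro a b
      apply Subtype.ext
      show X j * pderiv i ((a : MvPolynomial (Fin 2) K) + (b : MvPolynomial (Fin 2) K)) = _
      rw [map_add, mul_add]
      rfl
    · intro a b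
      apply Subtype.ext
      show X j * pderiv i ((a : MvPolynomial (Fin 2) K) * (b : MvPolynomial (Fin 2) K)) = _
      rw [pderiv_mul]
      show _ = (a : MvPolynomial (Fin 2) K) * (X j * pderiv i (b : MvPolynomial (Fin 2) K)) +
        (X j * pderiv i (a : MvPolynomial (Fin 2) K)) * (b : MvPolynomial (Fin 2) K)
      ring
    · intro b
      obtain ⟨n, hn⟩ := aux_pd_nil i (b : MvPolynomial (Fin 2) K)
      have hco : ∀ (o : ℕ) (c : ↥B), ((D^[o] c : ↥B) : MvPolynomial (Fin 2) K) =
          (fun q => X j * pderiv i q)^[o] (c : MvPolynomial (Fin 2) K) := by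
        intro o
        induction o with
        | zero => intro c; rfl
        | succ o ih =>
          intro c
          rw [Function.iterate_succ_apply', Function.iterate_succ_apply', ← ih]
      refine ⟨n, ?_⟩
      apply Subtype.ext
      rw [hco n b, aux_g_iter i j hij, hn, mul_zero]
      rfl
    · intro b hb
      have h0 : X j * pderiv i (b : MvPolynomial (Fin 2) K) = 0 := by
        have := congrArg Subtype.val hb
        exact this
      rcases mul_eq_zero.mp h0 with h | h
      · exact absurd h (MvPolynomial.X_ne_zero j)
      · exact h
  have hpart4 : ∀ b : ↥B, (∀ D : ↥B → ↥B, IsLND D → D b = 0) →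
      ∃ d : k, algebraMap k ↥B d = b := by
    intro b hball
    obtain ⟨D1, hD1, hker1⟩ := hD 0 1 (by decide) hg01
    obtain ⟨D2, hD2, hker2⟩ := hD 1 0 (by decide) hg10
    have h1 : pderiv 0 (b : MvPolynomial (Fin 2) K) = 0 := hker1 b (hball D1 hD1)
    have h2 : pderiv 1 (b : MvPolynomial (Fin 2) K) = 0 := hker2 b (hball D2 hD2)
    have hC : (b : MvPolynomial (Fin 2) K) = C (coeff 0 (b : MvPolynomial (Fin 2) K)) :=
      aux_eq_C _ h1 h2
    have hCB : C (coeff 0 (b : MvPolynomial (Fin 2) K)) ∈ B := hC ▸ b.2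
    obtain ⟨d, hd⟩ := hpart3 _ hCB
    refine ⟨d, Subtype.ext ?_⟩
    show ((algebraMap k ↥B d : ↥B) : MvPolynomial (Fin 2) K) = (b : MvPolynomial (Fin 2) K)
    rw [hC, ← hd, ← halg d]
    rfl
  exact ⟨hpart1, hpart2, hpart3, hpart4, hpart5⟩
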